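/- In the ring of formal power series ℚ[[T]], the series A(T) = Σ_{n≥0} (6n)!/((3n)!(2n)!) T^n and B(T) = Σ_{n≥0} ((6n+1)/(6n-1)) * (6n)!/((3n)!(2n)!) * T^n satisfy the identity A(T)·B(-T) + A(-T)·B(T) = -2. -/

import Mathlib

/-- `a n = (6n)! / ((3n)! (2n)!)`, as a rational number. -/
noncomputable def pixtonA (n : ℕ) : ℚ :=
  (Nat.factorial (6 * n) : ℚ) / ((Nat.factorial (3 * n) : ℚ) * (Nat.factorial (2 * n) : ℚ))

/-- `b n = ((6n+1)/(6n-1)) * a n`. -/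
noncomputable def pixtonB (n : ℕ) : ℚ :=
  ((6 * (n : ℚ) + 1) / (6 * (n : ℚ) - 1)) * pixtonA n

/-- The power series `A(T)`. -/
noncomputable def seriesA : PowerSeries ℚ := PowerSeries.mk pixtonA

/-- The power series `B(T)`. -/
noncomputable def seriesB : PowerSeries ℚ := PowerSeries.mk pixtonB

/-- The power series `A(-T)`. -/
noncomputable def seriesAneg : PowerSeries ℚ := PowerSeries.mk fun n => (-1) ^ n * pixtonA n

/-- The power series `B(-T)`. -/
noncomputable def seriesBneg : PowerSeries ℚ := PowerSeries.mk fun n => (-1) ^ n * pixtonB n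

open PowerSeries

namespace PixtonAux

lemma cast_fact_succ (m : ℕ) : (Nat.factorial (m+1) : ℚ) = ((m:ℚ)+1) * Nat.factorial m := by
  rw [Nat.factorial_succ]; push_cast; ring

lemma six_sub_one_ne (n : ℕ) : (6 * (n:ℚ) - 1) ≠ 0 := by
  cases n with
  | zero => norm_num
  | succ m =>
    have : (0:ℚ) ≤ m := m.cast_nonneg
    push_cast
    intro h; nlinarith

lemma pixA_succ (n : ℕ) :
    pixtonA (n+1) = (12*(6*(n:ℚ)+5)*(6*(n:ℚ)+1)/((n:ℚ)+1)) * pixtonA n := by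
  unfold pixtonA
  have e6 : (Nat.factorial (6*(n+1)) : ℚ)
      = ((6*(n:ℚ)+6)*(6*(n:ℚ)+5)*(6*(n:ℚ)+4)*(6*(n:ℚ)+3)*(6*(n:ℚ)+2)*(6*(n:ℚ)+1))
        * Nat.factorial (6*n) := by
    rw [show 6*(n+1) = (6*n+5)+1 by ring, cast_fact_succ,
        show 6*n+5 = (6*n+4)+1 by ring, cast_fact_succ,
        show 6*n+4 = (6*n+3)+1 by ring, cast_fact_succ,
        show 6*n+3 = (6*n+2)+1 by ring, cast_fact_succ,
        show 6*n+2 = (6*n+1)+1 by ring, cast_fact_succ,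
        show 6*n+1 = (6*n)+1 by ring, cast_fact_succ]
    push_cast; ring
  have e3 : (Nat.factorial (3*(n+1)) : ℚ)
      = ((3*(n:ℚ)+3)*(3*(n:ℚ)+2)*(3*(n:ℚ)+1)) * Nat.factorial (3*n) := by
    rw [show 3*(n+1) = (3*n+2)+1 by ring, cast_fact_succ,
        show 3*n+2 = (3*n+1)+1 by ring, cast_fact_succ,
        show 3*n+1 = (3*n)+1 by ring, cast_fact_succ]
    push_cast; ring
  have e2 : (Nat.factorial (2*(n+1)) : ℚ)
      = ((2*(n:ℚ)+2)*(2*(n:ℚ)+1)) * Nat.factorial (2*n) := by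
    rw [show 2*(n+1) = (2*n+1)+1 by ring, cast_fact_succ,
        show 2*n+1 = (2*n)+1 by ring, cast_fact_succ]
    push_cast; ring
  rw [e6, e3, e2]
  have h1 : (Nat.factorial (3*n) : ℚ) ≠ 0 := Nat.cast_ne_zero.mpr (Nat.factorial_pos _).ne'
  have h2 : (Nat.factorial (2*n) : ℚ) ≠ 0 := Nat.cast_ne_zero.mpr (Nat.factorial_pos _).ne'
  have h3 : ((n:ℚ)+1) ≠ 0 := by positivity
  have h4 : (3*(n:ℚ)+3) ≠ 0 := by positivity
  have h5 : (3*(n:ℚ)+2) ≠ 0 := by positivity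
  have h6 : (3*(n:ℚ)+1) ≠ 0 := by positivity
  have h7 : (2*(n:ℚ)+2) ≠ 0 := by positivity
  have h8 : (2*(n:ℚ)+1) ≠ 0 := by positivity
  field_simp
  ring

lemma pixB_succ (n : ℕ) :
    pixtonB (n+1) = (12*(6*(n:ℚ)+7)*(6*(n:ℚ)-1)/((n:ℚ)+1)) * pixtonB n := by
  unfold pixtonB
  rw [pixA_succ]
  have h1 : (6*((n:ℚ)+1) - 1) ≠ 0 := by
    have h0 := six_sub_one_ne (n+1); push_cast at h0
    intro h; exact h0 (by linarith)
  have h2 : (6*(n:ℚ) - 1) ≠ 0 := six_sub_one_ne n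
  have h3 : ((n:ℚ)+1) ≠ 0 := by positivity
  have h4 : (6*(n:ℚ)+1) ≠ 0 := by positivity
  push_cast
  field_simp
  ring

lemma pixA_eq_B (n : ℕ) : pixtonA n = (6*(n:ℚ)-1)/(6*(n:ℚ)+1) * pixtonB n := by
  unfold pixtonB
  have h2 : (6*(n:ℚ) - 1) ≠ 0 := six_sub_one_ne n
  have h4 : (6*(n:ℚ)+1) ≠ 0 := by positivity
  field_simp

lemma pixB_zero : pixtonB 0 = -1 := by
  unfold pixtonB pixtonA; norm_num

lemma pixB_one : pixtonB 1 = 84 := by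
  unfold pixtonB pixtonA
  norm_num [Nat.factorial]

lemma pixB_two : pixtonB 2 = 32760 := by
  rw [show (2:ℕ) = 1+1 from rfl, pixB_succ 1, pixB_one]
  norm_num

lemma hsix (n : ℕ) : (6*((n:ℚ)+1) - 1) ≠ 0 := by
  have h0 := six_sub_one_ne (n+1); push_cast at h0
  intro h; exact h0 (by linarith)

lemma hA : seriesA = 864 * ((X:ℚ⟦X⟧)^2 * d⁄dX ℚ seriesB) - seriesB - 144 * (X * seriesB) := by
  rw [show ((864:ℚ⟦X⟧)) = C (R := ℚ) 864 from (map_ofNat (C (R := ℚ)) 864).symm,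
      show ((144:ℚ⟦X⟧)) = C (R := ℚ) 144 from (map_ofNat (C (R := ℚ)) 144).symm]
  ext n
  simp only [map_sub, coeff_C_mul, seriesA, seriesB, coeff_mk]
  rcases n with _ | _ | n
  · simp only [coeff_X_pow_mul', coeff_succ_X_mul]
    norm_num [pixB_zero, pixtonA, coeff_zero_eq_constantCoeff]
  · rw [show (1:ℕ) = 0 + 1 from rfl, coeff_succ_X_mul]
    simp only [coeff_X_pow_mul']
    norm_num [pixB_zero, pixB_one, pixtonA, pixtonB, Nat.factorial]
  · rw [show n+1+1 = n + 2 from rfl, coeff_X_pow_mul, coeff_derivative,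
        show n+1+1 = (n+1) + 1 from rfl, coeff_succ_X_mul]
    simp only [coeff_mk]
    rw [pixA_eq_B (n+1+1), pixB_succ (n+1)]
    have h1 : (6*((n:ℚ)+1) - 1) ≠ 0 := hsix n
    have h2 : ((n:ℚ)+1+1) ≠ 0 := by positivity
    have h3 : (6*((n:ℚ)+1+1)+1) ≠ 0 := by positivity
    push_cast
    field_simp
    ring

lemma hAt : seriesAneg
    = 144 * (X * seriesBneg) - seriesBneg - 864 * ((X:ℚ⟦X⟧)^2 * d⁄dX ℚ seriesBneg) := by
  rw [show ((864:ℚ⟦X⟧)) = C (R := ℚ) 864 from (map_ofNat (C (R := ℚ)) 864).symm,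
      show ((144:ℚ⟦X⟧)) = C (R := ℚ) 144 from (map_ofNat (C (R := ℚ)) 144).symm]
  ext n
  simp only [map_sub, coeff_C_mul, seriesAneg, seriesBneg, coeff_mk]
  rcases n with _ | _ | n
  · simp only [coeff_X_pow_mul', coeff_succ_X_mul]
    norm_num [pixB_zero, pixtonA, coeff_zero_eq_constantCoeff]
  · rw [show (1:ℕ) = 0 + 1 from rfl, coeff_succ_X_mul]
    simp only [coeff_X_pow_mul']
    norm_num [pixB_zero, pixB_one, pixtonA, pixtonB, Nat.factorial]
  · rw [show n+1+1 = n + 2 from rfl, coeff_X_pow_mul, coeff_derivative,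
        show n+1+1 = (n+1) + 1 from rfl, coeff_succ_X_mul]
    simp only [coeff_mk]
    rw [pixA_eq_B (n+1+1), pixB_succ (n+1)]
    have h1 : (6*((n:ℚ)+1) - 1) ≠ 0 := hsix n
    have h2 : ((n:ℚ)+1+1) ≠ 0 := by positivity
    have h3 : (6*((n:ℚ)+1+1)+1) ≠ 0 := by positivity
    push_cast
    field_simp
    ring

lemma hode : 432 * ((X:ℚ⟦X⟧)^2 * d⁄dX ℚ (d⁄dX ℚ seriesB))
    = d⁄dX ℚ seriesB - 864 * (X * d⁄dX ℚ seriesB) + 84 * seriesB := by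
  rw [show ((432:ℚ⟦X⟧)) = C (R := ℚ) 432 from (map_ofNat (C (R := ℚ)) 432).symm,
      show ((864:ℚ⟦X⟧)) = C (R := ℚ) 864 from (map_ofNat (C (R := ℚ)) 864).symm,
      show ((84:ℚ⟦X⟧)) = C (R := ℚ) 84 from (map_ofNat (C (R := ℚ)) 84).symm]
  ext n
  simp only [map_sub, map_add, coeff_C_mul, seriesB, coeff_mk]
  rcases n with _ | _ | n
  · simp only [coeff_X_pow_mul', coeff_succ_X_mul, coeff_derivative, coeff_mk]
    norm_num [pixB_zero, pixB_one]
  · rw [show (1:ℕ) = 0 + 1 from rfl, coeff_succ_X_mul]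
    simp only [coeff_X_pow_mul', coeff_derivative, coeff_mk]
    norm_num [pixB_zero, pixB_one, pixB_two]
  · rw [show n+1+1 = n + 2 from rfl, coeff_X_pow_mul,
        show n+2 = (n+1) + 1 from rfl, coeff_succ_X_mul]
    simp only [coeff_derivative, coeff_mk]
    rw [show (n+1)+1+1 = (n+1+1)+1 from rfl, pixB_succ (n+1+1)]
    have h1 : (6*((n:ℚ)+1+1) - 1) ≠ 0 := by
      have h0 := hsix (n+1); push_cast at h0
      intro h; exact h0 (by linarith)
    have h2 : ((n:ℚ)+1+1+1) ≠ 0 := by positivity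
    push_cast
    field_simp
    ring

lemma hodet : 432 * ((X:ℚ⟦X⟧)^2 * d⁄dX ℚ (d⁄dX ℚ seriesBneg))
    = -(d⁄dX ℚ seriesBneg) - 864 * (X * d⁄dX ℚ seriesBneg) + 84 * seriesBneg := by
  rw [show ((432:ℚ⟦X⟧)) = C (R := ℚ) 432 from (map_ofNat (C (R := ℚ)) 432).symm,
      show ((864:ℚ⟦X⟧)) = C (R := ℚ) 864 from (map_ofNat (C (R := ℚ)) 864).symm,
      show ((84:ℚ⟦X⟧)) = C (R := ℚ) 84 from (map_ofNat (C (R := ℚ)) 84).symm]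
  ext n
  simp only [map_sub, map_add, map_neg, coeff_C_mul, seriesBneg, coeff_mk]
  rcases n with _ | _ | n
  · simp only [coeff_X_pow_mul', coeff_succ_X_mul, coeff_derivative, coeff_mk]
    norm_num [pixB_zero, pixB_one]
  · rw [show (1:ℕ) = 0 + 1 from rfl, coeff_succ_X_mul]
    simp only [coeff_X_pow_mul', coeff_derivative, coeff_mk]
    norm_num [pixB_zero, pixB_one, pixB_two]
  · rw [show n+1+1 = n + 2 from rfl, coeff_X_pow_mul,
        show n+2 = (n+1) + 1 from rfl, coeff_succ_X_mul]
    simp only [coeff_derivative, coeff_mk]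
    rw [show (n+1)+1+1 = (n+1+1)+1 from rfl, pixB_succ (n+1+1)]
    have h1 : (6*((n:ℚ)+1+1) - 1) ≠ 0 := by
      have h0 := hsix (n+1); push_cast at h0
      intro h; exact h0 (by linarith)
    have h2 : ((n:ℚ)+1+1+1) ≠ 0 := by positivity
    push_cast
    field_simp
    ring

lemma d_const (q : ℚ⟦X⟧) (c : ℚ) (h : q = C (R := ℚ) c) : d⁄dX ℚ q = 0 := by
  rw [h]; simp

lemma key : seriesB * seriesBneg
    - 432 * ((X:ℚ⟦X⟧)^2 * (d⁄dX ℚ seriesB * seriesBneg - seriesB * d⁄dX ℚ seriesBneg))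
    = 1 := by
  apply PowerSeries.derivative.ext
  · have d432 : d⁄dX ℚ (432 : ℚ⟦X⟧) = 0 := d_const _ 432 (map_ofNat (C (R := ℚ)) 432).symm
    have e0 : d⁄dX ℚ ((432:ℚ⟦X⟧) * ((X:ℚ⟦X⟧)^2
          * (d⁄dX ℚ seriesB * seriesBneg - seriesB * d⁄dX ℚ seriesBneg)))
        = 432 * d⁄dX ℚ ((X:ℚ⟦X⟧)^2
          * (d⁄dX ℚ seriesB * seriesBneg - seriesB * d⁄dX ℚ seriesBneg)) := by
      rw [Derivation.leibniz, d432]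
      simp [smul_eq_mul]
    have eX : d⁄dX ℚ ((X:ℚ⟦X⟧)^2) = 2 * X := by
      rw [pow_two, Derivation.leibniz, PowerSeries.derivative_X]
      simp [smul_eq_mul]
      ring
    have e1 : d⁄dX ℚ (seriesB * seriesBneg)
        = seriesB * d⁄dX ℚ seriesBneg + seriesBneg * d⁄dX ℚ seriesB := by
      rw [Derivation.leibniz]; simp [smul_eq_mul]
    have e2 : d⁄dX ℚ (d⁄dX ℚ seriesB * seriesBneg)
        = d⁄dX ℚ seriesB * d⁄dX ℚ seriesBneg + seriesBneg * d⁄dX ℚ (d⁄dX ℚ seriesB) := by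
      rw [Derivation.leibniz]; simp [smul_eq_mul]
    have e3 : d⁄dX ℚ (seriesB * d⁄dX ℚ seriesBneg)
        = seriesB * d⁄dX ℚ (d⁄dX ℚ seriesBneg) + d⁄dX ℚ seriesBneg * d⁄dX ℚ seriesB := by
      rw [Derivation.leibniz]; simp [smul_eq_mul]
    have e4 : d⁄dX ℚ ((X:ℚ⟦X⟧)^2
          * (d⁄dX ℚ seriesB * seriesBneg - seriesB * d⁄dX ℚ seriesBneg))
        = (X:ℚ⟦X⟧)^2 * (d⁄dX ℚ (d⁄dX ℚ seriesB * seriesBneg)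
            - d⁄dX ℚ (seriesB * d⁄dX ℚ seriesBneg))
          + (d⁄dX ℚ seriesB * seriesBneg - seriesB * d⁄dX ℚ seriesBneg) * (2 * X) := by
      rw [Derivation.leibniz, map_sub, eX]; simp [smul_eq_mul]
    rw [map_sub, e0, e4, e2, e3, e1, Derivation.map_one_eq_zero]
    linear_combination seriesB * hodet - seriesBneg * hode
  · simp only [map_sub, map_mul, map_one, map_pow]
    simp [seriesB, seriesBneg, constantCoeff_mk, pixB_zero]

end PixtonAux

theorem pixton_series_identity :
    seriesA * seriesBneg + seriesAneg * seriesB = -2 := by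
  rw [PixtonAux.hA, PixtonAux.hAt]
  linear_combination (-2 : ℚ⟦X⟧) * PixtonAux.key
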